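/- arXiv:1011.4829 — 4 statements merged into one kernel-verified Lean document; each statement's English description precedes it below -/
import Mathlib

section
/- For any four real matrices B, C, D, F of compatible dimensions, the nuclear norm of the block matrix [[B, C], [D, F]] is at least the nuclear norm of B: ‖[[B,C],[D,F]]‖_* ≥ ‖B‖_*. -/
open Matrix

/-- The nuclear norm of a real matrix: the sum of its singular values,
i.e. the sum of the square roots of the eigenvalues of `Mᵀ * M`. -/
noncomputable def nuclearNorm {m n : Type*} [Fintype m] [Fintype n] [DecidableEq n]
    (M : Matrix m n ℝ) : ℝ :=
  ∑ i, Real.sqrt ((Matrix.isHermitian_conjTranspose_mul_self M).eigenvalues i)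

section Aux

variable {m n : Type*} [Fintype m] [Fintype n] [DecidableEq n]

omit [DecidableEq n] in
/-- ⟨Px, Qy⟩ = ⟨x, (Pᵀ Q) y⟩ -/
lemma aux_dot (P Q : Matrix m n ℝ) (x y : n → ℝ) :
    (P *ᵥ x) ⬝ᵥ (Q *ᵥ y) = x ⬝ᵥ ((Pᵀ * Q) *ᵥ y) := by
  rw [← mulVec_mulVec, dotProduct_mulVec x Pᵀ, vecMul_transpose]

omit [DecidableEq n] in
lemma dot_self_nonneg (x : n → ℝ) : 0 ≤ x ⬝ᵥ x :=
  Finset.sum_nonneg fun i _ => mul_self_nonneg (x i)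

/-- Duality upper bound: tr(Xᵀ M) ≤ ‖M‖_* whenever X is an ℓ²-contraction. -/
lemma trace_le_nuclearNorm (M X : Matrix m n ℝ)
    (hX : ∀ u : n → ℝ, (X *ᵥ u) ⬝ᵥ (X *ᵥ u) ≤ u ⬝ᵥ u) :
    (Xᵀ * M).trace ≤ nuclearNorm M := by
  set hA := isHermitian_conjTranspose_mul_self M with hhA
  set V : Matrix n n ℝ := (hA.eigenvectorUnitary : Matrix n n ℝ) with hV
  set v : n → n → ℝ := fun i => ⇑(hA.eigenvectorBasis i) with hv
  have hH : Mᴴ = Mᵀ := conjTranspose_eq_transpose_of_trivial M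
  have hsV : star V = Vᵀ := by
    ext i j
    simp [Matrix.star_apply]
  have hVcol : ∀ i, V *ᵥ Pi.single i 1 = v i := fun i => hA.eigenvectorUnitary_mulVec i
  have hVV : Vᵀ * V = 1 := by
    rw [← hsV, hV]; simp
  have hVVt : V * Vᵀ = 1 := by
    rw [← hsV, hV]; simp
  have hvv : ∀ i, v i ⬝ᵥ v i = 1 := by
    intro i
    have h2 : (Pi.single i 1 : n → ℝ) ⬝ᵥ ((Vᵀ * V) *ᵥ Pi.single i 1) = 1 := by
      rw [hVV]; simp [Pi.single_apply]
    rw [← aux_dot, hVcol] at h2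
    exact h2
  have hMv : ∀ i, (M *ᵥ v i) ⬝ᵥ (M *ᵥ v i) = hA.eigenvalues i := by
    intro i
    rw [aux_dot]
    have h' : (Mᵀ * M) *ᵥ v i = hA.eigenvalues i • v i := by
      rw [← hH]; exact hA.mulVec_eigenvectorBasis i
    rw [h', dotProduct_smul, smul_eq_mul, hvv i, mul_one]
  have hd0 : ∀ i, 0 ≤ hA.eigenvalues i := fun i => (hMv i) ▸ dot_self_nonneg _
  have htr : (Xᵀ * M).trace = ∑ i, (X *ᵥ v i) ⬝ᵥ (M *ᵥ v i) := by
    have h1 : ∀ i, (X *ᵥ v i) ⬝ᵥ (M *ᵥ v i) = ((X * V)ᵀ * (M * V)) i i := by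
      intro i
      rw [← hVcol i, mulVec_mulVec, mulVec_mulVec, aux_dot, single_dotProduct, one_mul,
        mulVec_single]
      simp
    have h2 : ∑ i, ((X * V)ᵀ * (M * V)) i i = ((X * V)ᵀ * (M * V)).trace := by
      simp [Matrix.trace, Matrix.diag]
    have h3 : (X * V)ᵀ * (M * V) = Vᵀ * ((Xᵀ * M) * V) := by
      rw [transpose_mul]; simp only [Matrix.mul_assoc]
    rw [Finset.sum_congr rfl fun i _ => h1 i, h2, h3]
    symm
    rw [trace_mul_comm, Matrix.mul_assoc, hVVt, Matrix.mul_one]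
  rw [htr]
  unfold nuclearNorm
  apply Finset.sum_le_sum
  intro i _
  have cs : ((X *ᵥ v i) ⬝ᵥ (M *ᵥ v i)) ^ 2 ≤
      ((X *ᵥ v i) ⬝ᵥ (X *ᵥ v i)) * ((M *ᵥ v i) ⬝ᵥ (M *ᵥ v i)) := by
    have := Finset.sum_mul_sq_le_sq_mul_sq Finset.univ (X *ᵥ v i) (M *ᵥ v i)
    simpa [dotProduct, sq] using this
  calc (X *ᵥ v i) ⬝ᵥ (M *ᵥ v i)
      ≤ |(X *ᵥ v i) ⬝ᵥ (M *ᵥ v i)| := le_abs_self _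
    _ = Real.sqrt (((X *ᵥ v i) ⬝ᵥ (M *ᵥ v i)) ^ 2) := (Real.sqrt_sq_eq_abs _).symm
    _ ≤ Real.sqrt (hA.eigenvalues i) := by
        apply Real.sqrt_le_sqrt
        refine le_trans cs ?_
        rw [hMv i]
        have h1 : (X *ᵥ v i) ⬝ᵥ (X *ᵥ v i) ≤ 1 := (hX (v i)).trans_eq (hvv i)
        calc ((X *ᵥ v i) ⬝ᵥ (X *ᵥ v i)) * hA.eigenvalues i
            ≤ 1 * hA.eigenvalues i := mul_le_mul_of_nonneg_right h1 (hd0 i)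
          _ = hA.eigenvalues i := one_mul _

/-- Achievability: there is an ℓ²-contraction X with tr(Xᵀ B) = ‖B‖_*. -/
lemma exists_contraction_trace_eq (B : Matrix m n ℝ) :
    ∃ X : Matrix m n ℝ, (∀ u : n → ℝ, (X *ᵥ u) ⬝ᵥ (X *ᵥ u) ≤ u ⬝ᵥ u) ∧
      (Xᵀ * B).trace = nuclearNorm B := by
  set hA := isHermitian_conjTranspose_mul_self B with hhA
  set V : Matrix n n ℝ := (hA.eigenvectorUnitary : Matrix n n ℝ) with hV
  set d : n → ℝ := hA.eigenvalues with hd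
  set e : n → ℝ := fun i => (Real.sqrt (d i))⁻¹ with he
  have hd0 : ∀ i, 0 ≤ d i := fun i => (posSemidef_conjTranspose_mul_self B).eigenvalues_nonneg i
  have hH : Bᴴ = Bᵀ := conjTranspose_eq_transpose_of_trivial B
  have hsV : star V = Vᵀ := by
    ext i j
    simp [Matrix.star_apply]
  have hVV1 : Vᵀ * V = 1 := by
    rw [← hsV, hV]; simp
  have hVVt : V * Vᵀ = 1 := by
    rw [← hsV, hV]; simp
  have hVV : ∀ Z : Matrix n n ℝ, Vᵀ * (V * Z) = Z := by
    intro Z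
    rw [← Matrix.mul_assoc, hVV1, Matrix.one_mul]
  have hAeq : Bᵀ * B = V * (diagonal d * Vᵀ) := by
    have h := hA.spectral_theorem
    rw [Unitary.conjStarAlgAut_apply, ← hV, hsV] at h
    rw [← hH, h]
    simp [RCLike.ofReal_real_eq_id, Matrix.mul_assoc, hd]
  set E : Matrix n n ℝ := diagonal e with hE
  have hEt : Eᵀ = E := by rw [hE, diagonal_transpose]
  set W : Matrix n n ℝ := V * (E * Vᵀ) with hW
  have hWt : Wᵀ = W := by
    rw [hW, transpose_mul, transpose_mul, transpose_transpose, hEt, Matrix.mul_assoc]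
  have hXX : (B * W)ᵀ * (B * W) = V * (diagonal (fun i => e i * (d i * e i)) * Vᵀ) := by
    calc (B * W)ᵀ * (B * W) = (W * Bᵀ) * (B * W) := by rw [transpose_mul, hWt]
      _ = W * ((Bᵀ * B) * W) := by simp only [Matrix.mul_assoc]
      _ = W * (V * (diagonal d * (Vᵀ * W))) := by rw [hAeq]; simp only [Matrix.mul_assoc]
      _ = V * (E * (Vᵀ * (V * (diagonal d * (Vᵀ * W))))) := by
          rw [hW]; simp only [Matrix.mul_assoc]
      _ = V * (E * (diagonal d * (Vᵀ * W))) := by rw [hVV]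
      _ = V * (E * (diagonal d * (Vᵀ * (V * (E * Vᵀ))))) := by rw [hW]
      _ = V * (E * (diagonal d * (E * Vᵀ))) := by rw [hVV]
      _ = V * (diagonal (fun i => e i * (d i * e i)) * Vᵀ) := by
          rw [hE, ← Matrix.mul_assoc (diagonal d), diagonal_mul_diagonal,
            ← Matrix.mul_assoc (diagonal e), diagonal_mul_diagonal]
  have hc : ∀ i, e i * (d i * e i) ≤ 1 := by
    intro i
    rcases (hd0 i).eq_or_lt with h | h
    · simp [he, ← h]
    · have hs : Real.sqrt (d i) ≠ 0 := by positivity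
      have h1 : e i * (d i * e i) = 1 := by
        rw [he]
        simp only
        rw [← Real.mul_self_sqrt (hd0 i)]
        field_simp
        rw [Real.sqrt_sq (Real.sqrt_nonneg _)]
      rw [h1]
  refine ⟨B * W, ?_, ?_⟩
  · intro u
    rw [aux_dot, hXX, ← Matrix.mul_assoc]
    have key : ∀ w : n → ℝ, u ⬝ᵥ ((V * diagonal w * Vᵀ) *ᵥ u) =
        (Vᵀ *ᵥ u) ⬝ᵥ (diagonal w *ᵥ (Vᵀ *ᵥ u)) := by
      intro w
      rw [Matrix.mul_assoc, ← mulVec_mulVec, dotProduct_mulVec u V, ← mulVec_transpose,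
        mulVec_mulVec]
    rw [key]
    have hfin : (Vᵀ *ᵥ u) ⬝ᵥ (Vᵀ *ᵥ u) = u ⬝ᵥ u := by
      rw [aux_dot, transpose_transpose, hVVt]
      simp
    rw [← hfin]
    simp only [dotProduct, mulVec_diagonal]
    apply Finset.sum_le_sum
    intro i _
    calc (Vᵀ *ᵥ u) i * (e i * (d i * e i) * (Vᵀ *ᵥ u) i)
        = e i * (d i * e i) * ((Vᵀ *ᵥ u) i * (Vᵀ *ᵥ u) i) := by ring
      _ ≤ 1 * ((Vᵀ *ᵥ u) i * (Vᵀ *ᵥ u) i) :=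
          mul_le_mul_of_nonneg_right (hc i) (mul_self_nonneg _)
      _ = (Vᵀ *ᵥ u) i * (Vᵀ *ᵥ u) i := one_mul _
  · have h1 : (B * W)ᵀ * B = W * (Bᵀ * B) := by
      rw [transpose_mul, hWt, Matrix.mul_assoc]
    rw [h1, hAeq]
    have h2 : W * (V * (diagonal d * Vᵀ)) = V * (E * (diagonal d * Vᵀ)) := by
      rw [hW, Matrix.mul_assoc, Matrix.mul_assoc E, hVV]
    rw [h2, trace_mul_comm]
    have h3 : E * (diagonal d * Vᵀ) * V = E * diagonal d := by
      rw [Matrix.mul_assoc, Matrix.mul_assoc, hVV1, Matrix.mul_one]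
    rw [h3, hE, diagonal_mul_diagonal, trace_diagonal]
    unfold nuclearNorm
    apply Finset.sum_congr rfl
    intro i _
    show e i * d i = Real.sqrt (d i)
    rcases (hd0 i).eq_or_lt with h | h
    · simp [he, ← h]
    · have hs : Real.sqrt (d i) ≠ 0 := by positivity
      rw [he]
      simp only
      rw [← Real.mul_self_sqrt (hd0 i)]
      field_simp
      rw [Real.sqrt_sq (Real.sqrt_nonneg _)]

end Aux

theorem stmt_1 {m m' n n' : Type*} [Fintype m] [Fintype m'] [Fintype n] [Fintype n']
    [DecidableEq n] [DecidableEq n']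
    (B : Matrix m n ℝ) (C : Matrix m n' ℝ) (D : Matrix m' n ℝ) (F : Matrix m' n' ℝ) :
    nuclearNorm B ≤ nuclearNorm (Matrix.fromBlocks B C D F) := by
  obtain ⟨X, hX, hXB⟩ := exists_contraction_trace_eq B
  have key : ((fromBlocks X 0 0 0 : Matrix (m ⊕ m') (n ⊕ n') ℝ)ᵀ *
      fromBlocks B C D F).trace ≤ nuclearNorm (fromBlocks B C D F) := by
    apply trace_le_nuclearNorm
    intro u
    have hu : u = Sum.elim (u ∘ Sum.inl) (u ∘ Sum.inr) := (Sum.elim_comp_inl_inr u).symm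
    rw [hu, fromBlocks_mulVec]
    simp only [zero_mulVec, add_zero, zero_add, Matrix.zero_mulVec]
    rw [sumElim_dotProduct_sumElim, sumElim_dotProduct_sumElim]
    simp only [Sum.elim_comp_inl, Sum.elim_comp_inr]
    have h0 : (0 : m' → ℝ) ⬝ᵥ (0 : m' → ℝ) = 0 := by simp
    rw [h0]
    have := dot_self_nonneg (u ∘ Sum.inr)
    linarith [hX (u ∘ Sum.inl)]
  refine le_trans ?_ key
  rw [← hXB]
  have : (fromBlocks X 0 0 0 : Matrix (m ⊕ m') (n ⊕ n') ℝ)ᵀ * fromBlocks B C D F =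
      fromBlocks (Xᵀ * B) (Xᵀ * C) 0 0 := by
    rw [fromBlocks_transpose, fromBlocks_multiply]
    simp
  rw [this]
  simp [Matrix.trace, Fintype.sum_sum_type]
end

section
/- Let A ≠ 0 and X be real matrices with column space of X contained in column space of A, and let [X, A] = U Σ V^T be a skinny SVD with V partitioned as V = [V_X; V_A] so that A = U Σ V_A^T. Then V_A^T has full row rank, i.e., V_A^T V_A is invertible. -/
open Matrix

theorem stmt_8 {p q s : Type*} [Fintype p] [Fintype q] [Fintype s]
    [DecidableEq q] [DecidableEq s] {r : ℕ}
    (X : Matrix p q ℝ) (A : Matrix p s ℝ)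
    (hA : A ≠ 0) (hspan : ∃ Z : Matrix s q ℝ, X = A * Z)
    (U : Matrix p (Fin r) ℝ) (σ : Fin r → ℝ)
    (VX : Matrix q (Fin r) ℝ) (VA : Matrix s (Fin r) ℝ)
    (hσ : ∀ i, 0 < σ i)
    (hU : Uᵀ * U = 1) (hV : VXᵀ * VX + VAᵀ * VA = 1)
    (hX : X = U * Matrix.diagonal σ * VXᵀ) (hA' : A = U * Matrix.diagonal σ * VAᵀ) :
    IsUnit (VAᵀ * VA) := by
  obtain ⟨Z, hZ⟩ := hspan
  set D := Matrix.diagonal σ with hD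
  have hDu : IsUnit D := by
    rw [Matrix.isUnit_iff_isUnit_det, hD, Matrix.det_diagonal]
    exact (Finset.prod_pos (fun i _ => hσ i)).ne'.isUnit
  -- U * D * VXᵀ = U * D * VAᵀ * Z
  have h1 : U * D * VXᵀ = U * D * (VAᵀ * Z) := by
    rw [← hX, hZ, hA']; rw [Matrix.mul_assoc]
  have h2 : D * VXᵀ = D * (VAᵀ * Z) := by
    have := congrArg (fun M => Uᵀ * M) h1
    simpa [Matrix.mul_assoc, ← Matrix.mul_assoc Uᵀ U, hU] using this
  have h3 : VXᵀ = VAᵀ * Z := by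
    have := congrArg (fun M => D⁻¹ * M) h2
    simpa [← Matrix.mul_assoc, Matrix.nonsing_inv_mul D (Matrix.isUnit_iff_isUnit_det D |>.mp hDu)] using this
  have hVX : VX = Zᵀ * VA := by
    have := congrArg Matrix.transpose h3
    simpa using this
  have key : VAᵀ * (Z * Zᵀ + 1) * VA = 1 := by
    rw [Matrix.mul_add, Matrix.add_mul, Matrix.mul_one, ← hV, hVX, Matrix.transpose_mul,
      Matrix.transpose_transpose, Matrix.mul_assoc]
    simp [Matrix.mul_assoc]
  -- VA mulVec injective
  have hVAinj : Function.Injective (VA.mulVec) := by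
    intro v w hvw
    have : ∀ u, (VAᵀ * (Z * Zᵀ + 1) * VA).mulVec u = u := by
      intro u; rw [key, Matrix.one_mulVec]
    calc v = (VAᵀ * (Z * Zᵀ + 1) * VA).mulVec v := (this v).symm
      _ = (VAᵀ * (Z * Zᵀ + 1)).mulVec (VA.mulVec w) := by
          rw [← Matrix.mulVec_mulVec, hvw]
      _ = (VAᵀ * (Z * Zᵀ + 1) * VA).mulVec w := by simp [Matrix.mulVec_mulVec]
      _ = w := this w
  rw [← Matrix.mulVec_injective_iff_isUnit]
  intro v w hvw
  apply hVAinj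
  have h0 : (VA.mulVec (v - w)) ⬝ᵥ (VA.mulVec (v - w)) = 0 := by
    have hz : (VAᵀ * VA).mulVec (v - w) = 0 := by
      rw [Matrix.mulVec_sub, hvw, sub_self]
    have : (v - w) ⬝ᵥ ((VAᵀ * VA).mulVec (v - w)) = 0 := by rw [hz, dotProduct_zero]
    rw [← Matrix.mulVec_mulVec, Matrix.dotProduct_mulVec, Matrix.vecMul_transpose] at this
    exact this
  have : VA.mulVec (v - w) = 0 := by
    ext i
    have := (Finset.sum_eq_zero_iff_of_nonneg (fun j _ => mul_self_nonneg _)).mp h0 i (Finset.mem_univ i)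
    simpa [mul_self_eq_zero] using this
  rwa [Matrix.mulVec_sub, sub_eq_zero] at this
end

section
/- Suppose A is a real matrix of full row rank and X is any matrix with the same number of rows as A. Then Z* = A^T (A A^T)^{-1} X is the unique minimizer of ‖Z‖_* subject to X = A Z. -/
open Matrix

section Helpers

variable {m n : Type*} [Fintype m] [Fintype n] [DecidableEq n]

noncomputable def Matrix.PosSemidef.sqrt {S : Matrix n n ℝ} (hS : S.PosSemidef) : Matrix n n ℝ :=
  hS.1.eigenvectorUnitary.1 * diagonal (Real.sqrt ∘ hS.1.eigenvalues) *
    (star hS.1.eigenvectorUnitary : Matrix n n ℝ)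

theorem Matrix.PosSemidef.posSemidef_sqrt {S : Matrix n n ℝ} (hS : S.PosSemidef) :
    hS.sqrt.PosSemidef := by
  unfold Matrix.PosSemidef.sqrt
  have hd : (diagonal (Real.sqrt ∘ hS.1.eigenvalues)).PosSemidef :=
    PosSemidef.diagonal (fun i => Real.sqrt_nonneg _)
  simpa [star_eq_conjTranspose] using
    hd.mul_mul_conjTranspose_same (hS.1.eigenvectorUnitary : Matrix n n ℝ)

theorem Matrix.PosSemidef.sqrt_mul_self {S : Matrix n n ℝ} (hS : S.PosSemidef) :
    hS.sqrt * hS.sqrt = S := by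
  unfold Matrix.PosSemidef.sqrt
  conv_rhs => rw [hS.1.spectral_theorem, Unitary.conjStarAlgAut_apply]
  have hu : (star hS.1.eigenvectorUnitary : Matrix n n ℝ) * hS.1.eigenvectorUnitary.1 = 1 :=
    Unitary.coe_star_mul_self _
  calc _ = (hS.1.eigenvectorUnitary.1 * (diagonal (Real.sqrt ∘ hS.1.eigenvalues) *
        ((star hS.1.eigenvectorUnitary : Matrix n n ℝ) * hS.1.eigenvectorUnitary.1) *
        diagonal (Real.sqrt ∘ hS.1.eigenvalues))) *
        (star hS.1.eigenvectorUnitary : Matrix n n ℝ) := by simp only [Matrix.mul_assoc]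
    _ = _ := by
      rw [hu, Matrix.mul_one, diagonal_mul_diagonal]
      congr 3
      ext i
      simp [Real.mul_self_sqrt (hS.eigenvalues_nonneg i)]

private lemma trace_nonneg_of_posSemidef {S : Matrix n n ℝ} (hS : S.PosSemidef) :
    0 ≤ S.trace := by
  rw [Matrix.trace]
  refine Finset.sum_nonneg fun i _ => ?_
  have := hS.dotProduct_mulVec_nonneg (Pi.single i 1)
  simpa [single_dotProduct, Matrix.mulVec_single, Matrix.diag] using this

private lemma eq_zero_of_trace_eq_zero {S : Matrix n n ℝ} (hS : S.PosSemidef)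
    (h : S.trace = 0) : S = 0 := by
  obtain ⟨B, rfl⟩ : ∃ B : Matrix n n ℝ, S = Bᴴ * B :=
    ⟨hS.sqrt, by rw [hS.posSemidef_sqrt.1.eq, hS.sqrt_mul_self]⟩
  have hB : B = 0 := by
    have h' : ∑ i, ∑ j, (B j i) ^ 2 = 0 := by
      rw [← h, Matrix.trace]
      simp [Matrix.diag, Matrix.mul_apply, Matrix.conjTranspose_apply, sq]
    ext j i
    have h1 : ∀ i ∈ Finset.univ, (0:ℝ) ≤ ∑ j, (B j i) ^ 2 :=
      fun i _ => Finset.sum_nonneg fun j _ => sq_nonneg _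
    have h2 := (Finset.sum_eq_zero_iff_of_nonneg h1).mp h' i (Finset.mem_univ i)
    have h3 := (Finset.sum_eq_zero_iff_of_nonneg
      (fun j _ => sq_nonneg (B j i))).mp h2 j (Finset.mem_univ j)
    simpa using pow_eq_zero_iff (n := 2) (by norm_num) |>.mp h3
  simp [hB]

private lemma posSemidef_sqrt_sub {B C : Matrix n n ℝ} (hB : B.PosSemidef)
    (hC : C.PosSemidef) : ((hB.add hC).sqrt - hB.sqrt).PosSemidef := by
  set T := (hB.add hC).sqrt with hTdef
  set S := hB.sqrt with hSdef
  have hT : T.PosSemidef := (hB.add hC).posSemidef_sqrt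
  have hS : S.PosSemidef := hB.posSemidef_sqrt
  have hD : (T - S).IsHermitian := hT.1.sub hS.1
  refine hD.posSemidef_iff_eigenvalues_nonneg.mpr fun i => ?_
  set t := hD.eigenvalues i with htdef
  by_contra hneg
  push_neg at hneg
  replace hneg : t < 0 := hneg
  set v : n → ℝ := ⇑(hD.eigenvectorBasis i) with hvdef
  have hv : (T - S) *ᵥ v = t • v := hD.mulVec_eigenvectorBasis i
  have hvne : v ≠ 0 := by
    intro h0
    apply hD.eigenvectorBasis.orthonormal.ne_zero i
    ext j
    exact congrFun h0 j
  have hTT : T * T = B + C := by rw [hTdef]; exact (hB.add hC).sqrt_mul_self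
  have hSS : S * S = B := by rw [hSdef]; exact hB.sqrt_mul_self
  have hsplit : T * (T - S) + (T - S) * S = C := by
    have h1 : T * (T - S) + (T - S) * S = T * T - S * S := by noncomm_ring
    rw [h1, hTT, hSS]; abel
  have hsm : star v ᵥ* (T - S) = t • star v := by
    rw [← hD.eq, ← star_mulVec, hv, star_smul]
    simp
  have hq : star v ⬝ᵥ C *ᵥ v
      = t * (star v ⬝ᵥ T *ᵥ v) + t * (star v ⬝ᵥ S *ᵥ v) := by
    rw [← hsplit, add_mulVec, dotProduct_add]
    congr 1
    · rw [← mulVec_mulVec, hv, mulVec_smul, dotProduct_smul, smul_eq_mul]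
    · rw [← mulVec_mulVec, dotProduct_mulVec, hsm, smul_dotProduct, smul_eq_mul]
  have hqC : 0 ≤ star v ⬝ᵥ C *ᵥ v := hC.dotProduct_mulVec_nonneg v
  have hqT : 0 ≤ star v ⬝ᵥ T *ᵥ v := hT.dotProduct_mulVec_nonneg v
  have hqS : 0 ≤ star v ⬝ᵥ S *ᵥ v := hS.dotProduct_mulVec_nonneg v
  have hTv : star v ⬝ᵥ T *ᵥ v = 0 ∧ star v ⬝ᵥ S *ᵥ v = 0 := by
    constructor <;> nlinarith [hq, hqC, hqT, hqS, hneg]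
  have hT0 : T *ᵥ v = 0 := (hT.dotProduct_mulVec_zero_iff v).mp hTv.1
  have hS0 : S *ᵥ v = 0 := (hS.dotProduct_mulVec_zero_iff v).mp hTv.2
  have hz : t • v = 0 := by rw [← hv, sub_mulVec, hT0, hS0, sub_zero]
  rcases smul_eq_zero.mp hz with h | h
  · exact absurd h (ne_of_lt hneg)
  · exact hvne h

private lemma trace_sqrt_eq {S : Matrix n n ℝ} (hS : S.PosSemidef) :
    hS.sqrt.trace = ∑ i, Real.sqrt (hS.1.eigenvalues i) := by
  rw [Matrix.PosSemidef.sqrt, Matrix.trace_mul_cycle,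
    Unitary.coe_star_mul_self hS.1.eigenvectorUnitary, one_mul, Matrix.trace_diagonal]
  simp

private lemma nuclearNorm_eq_trace (M : Matrix m n ℝ) :
    nuclearNorm M = (Matrix.posSemidef_conjTranspose_mul_self M).sqrt.trace := by
  rw [trace_sqrt_eq]
  rfl

private lemma sqrt_congr {S₁ S₂ : Matrix n n ℝ} (h : S₁ = S₂) (h₁ : S₁.PosSemidef)
    (h₂ : S₂.PosSemidef) : h₁.sqrt = h₂.sqrt := by subst h; rfl

private lemma proj_helper {q : Type*} [Fintype q] {P : Matrix n n ℝ} (hP : Pᴴ = P)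
    (hPP : P * P = P) (Z : Matrix n q ℝ) :
    (P * Z)ᴴ * (P * Z) = Zᴴ * (P * Z) := by
  rw [conjTranspose_mul, hP, Matrix.mul_assoc, ← Matrix.mul_assoc P P Z, hPP]

private lemma isUnit_det_of_rank_eq_card {S : Matrix m m ℝ} [DecidableEq m]
    (h : S.rank = Fintype.card m) : IsUnit S.det := by
  rw [← Matrix.isUnit_iff_isUnit_det, ← Matrix.mulVec_surjective_iff_isUnit]
  have htop : LinearMap.range S.mulVecLin = ⊤ := by
    apply Submodule.eq_top_of_finrank_eq
    rw [← Matrix.rank, h, Module.finrank_pi]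
  intro y
  obtain ⟨x, hx⟩ := LinearMap.range_eq_top.mp htop y
  exact ⟨x, hx⟩

end Helpers

theorem stmt_10 {m n q : Type*} [Fintype m] [Fintype n] [Fintype q]
    [DecidableEq m] [DecidableEq n] [DecidableEq q]
    (A : Matrix m n ℝ) (X : Matrix m q ℝ)
    (hA : A.rank = Fintype.card m) :
    X = A * (Aᵀ * (A * Aᵀ)⁻¹ * X) ∧
    (∀ Z : Matrix n q ℝ, X = A * Z →
      nuclearNorm (Aᵀ * (A * Aᵀ)⁻¹ * X) ≤ nuclearNorm Z) ∧
    (∀ Z : Matrix n q ℝ, X = A * Z →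
      nuclearNorm Z = nuclearNorm (Aᵀ * (A * Aᵀ)⁻¹ * X) →
      Z = Aᵀ * (A * Aᵀ)⁻¹ * X) := by
  have hU : IsUnit (A * Aᵀ).det := by
    apply isUnit_det_of_rank_eq_card
    rw [Matrix.rank_self_mul_transpose, hA]
  -- first component
  have hfeas : X = A * (Aᵀ * (A * Aᵀ)⁻¹ * X) := by
    simp only [← Matrix.mul_assoc]
    rw [Matrix.mul_nonsing_inv _ hU, Matrix.one_mul]
  -- the projection
  set P : Matrix n n ℝ := Aᵀ * (A * Aᵀ)⁻¹ * A with hPdef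
  have hPt : Pᵀ = P := by
    rw [hPdef]
    rw [Matrix.transpose_mul, Matrix.transpose_mul, Matrix.transpose_nonsing_inv,
      Matrix.transpose_mul, Matrix.transpose_transpose, Matrix.mul_assoc]
  have hPH : Pᴴ = P := by rw [Matrix.conjTranspose_eq_transpose_of_trivial, hPt]
  have hPP : P * P = P := by
    rw [hPdef]
    simp only [Matrix.mul_assoc]
    rw [← Matrix.mul_assoc A Aᵀ, Matrix.nonsing_inv_mul_cancel_left _ _ hU]
  have hQH : (1 - P)ᴴ = 1 - P := by
    rw [Matrix.conjTranspose_sub, hPH, Matrix.conjTranspose_one]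
  have hQQ : (1 - P) * (1 - P) = 1 - P := by
    rw [Matrix.mul_sub, Matrix.sub_mul, Matrix.sub_mul, hPP]
    simp
  -- main estimates: for Z with X = A * Z
  have key : ∀ Z : Matrix n q ℝ, X = A * Z →
      Aᵀ * (A * Aᵀ)⁻¹ * X = P * Z ∧
      nuclearNorm (P * Z) ≤ nuclearNorm Z ∧
      (nuclearNorm Z = nuclearNorm (P * Z) → Z = P * Z) := by
    intro Z hZ
    have hZs : Aᵀ * (A * Aᵀ)⁻¹ * X = P * Z := by
      rw [hZ, hPdef]
      simp only [Matrix.mul_assoc]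
    refine ⟨hZs, ?_⟩
    -- decomposition Zᴴ Z = B + C
    have hB : ((P * Z)ᴴ * (P * Z)).PosSemidef := Matrix.posSemidef_conjTranspose_mul_self _
    have hC : (((1 - P) * Z)ᴴ * ((1 - P) * Z)).PosSemidef :=
      Matrix.posSemidef_conjTranspose_mul_self _
    have hBC : (P * Z)ᴴ * (P * Z) + ((1 - P) * Z)ᴴ * ((1 - P) * Z) = Zᴴ * Z := by
      rw [proj_helper hPH hPP, proj_helper hQH hQQ, ← Matrix.mul_add, ← Matrix.add_mul]
      simp
    have hZZ : (Matrix.posSemidef_conjTranspose_mul_self Z).sqrt = (hB.add hC).sqrt :=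
      sqrt_congr hBC.symm _ _
    have hmono : nuclearNorm (P * Z) ≤ nuclearNorm Z := by
      rw [nuclearNorm_eq_trace, nuclearNorm_eq_trace, hZZ]
      have := trace_nonneg_of_posSemidef (posSemidef_sqrt_sub hB hC)
      rw [Matrix.trace_sub] at this
      linarith
    refine ⟨hmono, fun heq => ?_⟩
    -- equality case
    have htr : ((hB.add hC).sqrt - hB.sqrt).trace = 0 := by
      rw [Matrix.trace_sub]
      rw [nuclearNorm_eq_trace, nuclearNorm_eq_trace, hZZ] at heq
      linarith [heq]
    have hsq : (hB.add hC).sqrt = hB.sqrt := by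
      have := eq_zero_of_trace_eq_zero (posSemidef_sqrt_sub hB hC) htr
      rwa [sub_eq_zero] at this
    have hBCB : (P * Z)ᴴ * (P * Z) + ((1 - P) * Z)ᴴ * ((1 - P) * Z)
        = (P * Z)ᴴ * (P * Z) := by
      conv_lhs => rw [← (hB.add hC).sqrt_mul_self]
      rw [hsq, hB.sqrt_mul_self]
    have hC0 : ((1 - P) * Z)ᴴ * ((1 - P) * Z) = 0 := by
      have := hBCB
      rwa [add_eq_left] at this
    have hW0 : (1 - P) * Z = 0 := Matrix.conjTranspose_mul_self_eq_zero.mp hC0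
    have : Z - P * Z = 0 := by
      rw [← hW0, Matrix.sub_mul, Matrix.one_mul]
    rw [sub_eq_zero] at this
    exact this
  refine ⟨hfeas, fun Z hZ => ?_, fun Z hZ heq => ?_⟩
  · obtain ⟨h1, h2, _⟩ := key Z hZ
    rw [h1]; exact h2
  · obtain ⟨h1, _, h3⟩ := key Z hZ
    rw [h1] at heq ⊢
    exact h3 heq
end

section
/- Let X ≠ 0 be a real matrix with skinny SVD X = U_X Σ_X V_X^T. Then Z* = V_X V_X^T (the shape interaction matrix of X) is the unique minimizer of ‖Z‖_* subject to X = X Z. -/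
open Matrix

namespace NNProof

variable {q : Type*} [Fintype q] [DecidableEq q]

lemma dp_self_nonneg {m : Type*} [Fintype m] (x : m → ℝ) : 0 ≤ x ⬝ᵥ x :=
  Finset.sum_nonneg fun i _ => mul_self_nonneg _

lemma dp_mulVec {m n : Type*} [Fintype m] [Fintype n] (M : Matrix m n ℝ) (y : n → ℝ) (x : m → ℝ) :
    (M *ᵥ y) ⬝ᵥ x = y ⬝ᵥ (Mᵀ *ᵥ x) := by
  rw [dotProduct_comm, Matrix.dotProduct_mulVec, Matrix.mulVec_transpose,
    dotProduct_comm]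

lemma dp_mulVec' {m n : Type*} [Fintype m] [Fintype n] (M : Matrix m n ℝ) (x : m → ℝ) (y : n → ℝ) :
    x ⬝ᵥ (M *ᵥ y) = (Mᵀ *ᵥ x) ⬝ᵥ y := by
  rw [dp_mulVec, Matrix.transpose_transpose]

lemma orth {A : Matrix q q ℝ} (hA : A.IsHermitian) (i j : q) :
    ⇑(hA.eigenvectorBasis i) ⬝ᵥ ⇑(hA.eigenvectorBasis j) = if i = j then 1 else 0 := by
  have h := Matrix.mem_unitaryGroup_iff'.mp hA.eigenvectorUnitary.2
  have h2 := congrFun (congrFun h i) j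
  simp only [Matrix.mul_apply, Matrix.star_apply, star_trivial,
    Matrix.IsHermitian.eigenvectorUnitary_apply, Matrix.one_apply] at h2
  simpa [dotProduct] using h2

lemma trace_formula {A : Matrix q q ℝ} (hA : A.IsHermitian) (M : Matrix q q ℝ) :
    M.trace = ∑ i, ⇑(hA.eigenvectorBasis i) ⬝ᵥ (M *ᵥ ⇑(hA.eigenvectorBasis i)) := by
  have hq : (hA.eigenvectorUnitary : Matrix q q ℝ) * star (hA.eigenvectorUnitary : Matrix q q ℝ)
      = 1 := Matrix.mem_unitaryGroup_iff.mp hA.eigenvectorUnitary.2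
  have h1 : M.trace = (star (hA.eigenvectorUnitary : Matrix q q ℝ) *
      (M * (hA.eigenvectorUnitary : Matrix q q ℝ))).trace := by
    rw [Matrix.trace_mul_comm, Matrix.mul_assoc, hq, Matrix.mul_one]
  rw [h1, Matrix.trace]
  apply Finset.sum_congr rfl
  intro i _
  simp [Matrix.diag, Matrix.mul_apply, Matrix.star_apply, Matrix.mulVec, dotProduct,
    Finset.mul_sum, mul_comm]

lemma key (P Z : Matrix q q ℝ) (hPsym : Pᵀ = P) (hPP : P * P = P) (hPZ : P * Z = P) :
    P.trace ≤ nuclearNorm Z ∧ (nuclearNorm Z = P.trace → Z = P) := by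
  have hA : (Zᵀ * Z).IsHermitian := Matrix.isHermitian_conjTranspose_mul_self Z
  set lam : q → ℝ := hA.eigenvalues with hlamdef
  set v : q → q → ℝ := fun i => ⇑(hA.eigenvectorBasis i) with hvdef
  have hnn : nuclearNorm Z = ∑ i, Real.sqrt (lam i) := rfl
  have hvv : ∀ i, v i ⬝ᵥ v i = 1 := fun i => by simpa using orth hA i i
  have hAv : ∀ i, (Zᵀ * Z) *ᵥ v i = lam i • v i := fun i => hA.mulVec_eigenvectorBasis i
  have hww : ∀ i, (Z *ᵥ v i) ⬝ᵥ (Z *ᵥ v i) = lam i := by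
    intro i
    rw [dp_mulVec, Matrix.mulVec_mulVec, hAv i, dotProduct_smul, smul_eq_mul, hvv i,
      mul_one]
  have hlam0 : ∀ i, 0 ≤ lam i := fun i => (hww i) ▸ dp_self_nonneg _
  have hPtP : Pᵀ * P = P := by rw [hPsym, hPP]
  have hPvPv : ∀ x : q → ℝ, (P *ᵥ x) ⬝ᵥ (P *ᵥ x) = x ⬝ᵥ (P *ᵥ x) := by
    intro x
    rw [dp_mulVec, Matrix.mulVec_mulVec, hPtP]
  have hsle : ∀ i, v i ⬝ᵥ (P *ᵥ v i) ≤ 1 ∧ (v i ⬝ᵥ (P *ᵥ v i) = 1 → P *ᵥ v i = v i) := by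
    intro i
    have hc : (P *ᵥ v i) ⬝ᵥ v i = v i ⬝ᵥ (P *ᵥ v i) := dotProduct_comm _ _
    have hd : (v i - P *ᵥ v i) ⬝ᵥ (v i - P *ᵥ v i) = 1 - v i ⬝ᵥ (P *ᵥ v i) := by
      simp only [sub_dotProduct, dotProduct_sub, hvv i, hPvPv, hc]
      ring
    have hd0 := dp_self_nonneg (v i - P *ᵥ v i)
    constructor
    · linarith [hd ▸ hd0]
    · intro h1
      have h2 : (v i - P *ᵥ v i) ⬝ᵥ (v i - P *ᵥ v i) = 0 := by rw [hd, h1]; ring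
      have h3 := dotProduct_self_eq_zero.mp h2
      exact (sub_eq_zero.mp h3).symm
  have htr : P.trace = ∑ i, (P *ᵥ v i) ⬝ᵥ (Z *ᵥ v i) := by
    rw [trace_formula hA P]
    apply Finset.sum_congr rfl
    intro i _
    conv_lhs => rw [← hPZ, ← Matrix.mulVec_mulVec]
    rw [dp_mulVec', hPsym]
  have hbound : ∀ i, (P *ᵥ v i) ⬝ᵥ (Z *ᵥ v i) ≤ Real.sqrt (lam i) := by
    intro i
    have hs0 : 0 ≤ Real.sqrt (lam i) := Real.sqrt_nonneg _
    have hs2 : Real.sqrt (lam i) * Real.sqrt (lam i) = lam i := Real.mul_self_sqrt (hlam0 i)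
    set s := Real.sqrt (lam i) with hs
    rcases eq_or_lt_of_le hs0 with h0 | hpos
    · have hl : lam i = 0 := by rw [← hs2, ← h0, mul_zero]
      have hw0 : Z *ᵥ v i = 0 := dotProduct_self_eq_zero.mp (by rw [hww i, hl])
      rw [hw0, dotProduct_zero, ← h0]
    · have hc : (Z *ᵥ v i) ⬝ᵥ (P *ᵥ v i) = (P *ᵥ v i) ⬝ᵥ (Z *ᵥ v i) :=
        dotProduct_comm _ _
      have h := dp_self_nonneg (Z *ᵥ v i - s • (P *ᵥ v i))
      simp only [sub_dotProduct, dotProduct_sub, smul_dotProduct,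
        dotProduct_smul, smul_eq_mul, hww i, hPvPv, hc] at h
      have hle1 := (hsle i).1
      nlinarith [h, hle1, hs2, hpos]
  have hineq : P.trace ≤ nuclearNorm Z := by
    rw [htr, hnn]
    exact Finset.sum_le_sum fun i _ => hbound i
  refine ⟨hineq, ?_⟩
  intro heq
  have hsum : ∑ i, (P *ᵥ v i) ⬝ᵥ (Z *ᵥ v i) = ∑ i, Real.sqrt (lam i) := by
    rw [← htr, ← hnn, heq]
  have heach : ∀ i, (P *ᵥ v i) ⬝ᵥ (Z *ᵥ v i) = Real.sqrt (lam i) := by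
    intro i
    exact (Finset.sum_eq_sum_iff_of_le (fun i _ => hbound i)).mp hsum i (Finset.mem_univ i)
  have hcol : ∀ i, Z *ᵥ v i = P *ᵥ v i := by
    intro i
    have hs0 : 0 ≤ Real.sqrt (lam i) := Real.sqrt_nonneg _
    have hs2 : Real.sqrt (lam i) * Real.sqrt (lam i) = lam i := Real.mul_self_sqrt (hlam0 i)
    set s := Real.sqrt (lam i) with hs
    have hPv_eq : P *ᵥ v i = P *ᵥ (Z *ᵥ v i) := by rw [Matrix.mulVec_mulVec, hPZ]
    rcases eq_or_lt_of_le hs0 with h0 | hpos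
    · have hl : lam i = 0 := by rw [← hs2, ← h0, mul_zero]
      have hw0 : Z *ᵥ v i = 0 := dotProduct_self_eq_zero.mp (by rw [hww i, hl])
      rw [hw0, hPv_eq, hw0, Matrix.mulVec_zero]
    · have ht : (P *ᵥ v i) ⬝ᵥ (Z *ᵥ v i) = s := heach i
      have hc : (Z *ᵥ v i) ⬝ᵥ (P *ᵥ v i) = (P *ᵥ v i) ⬝ᵥ (Z *ᵥ v i) :=
        dotProduct_comm _ _
      have hu : (Z *ᵥ v i - s • (P *ᵥ v i)) ⬝ᵥ (Z *ᵥ v i - s • (P *ᵥ v i))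
          = s * s * (v i ⬝ᵥ (P *ᵥ v i) - 1) := by
        simp only [sub_dotProduct, dotProduct_sub, smul_dotProduct,
          dotProduct_smul, smul_eq_mul, hww i, hPvPv, hc, ht, ← hs2]
        ring
      have hu0 := dp_self_nonneg (Z *ᵥ v i - s • (P *ᵥ v i))
      have hle1 := (hsle i).1
      have hc1 : v i ⬝ᵥ (P *ᵥ v i) = 1 := by nlinarith [hu, hu0, hle1, hpos, mul_pos hpos hpos]
      have hu00 : (Z *ᵥ v i - s • (P *ᵥ v i)) ⬝ᵥ (Z *ᵥ v i - s • (P *ᵥ v i)) = 0 := by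
        rw [hu, hc1]; ring
      have hueq : Z *ᵥ v i = s • (P *ᵥ v i) :=
        sub_eq_zero.mp (dotProduct_self_eq_zero.mp hu00)
      have hPvv : P *ᵥ v i = v i := (hsle i).2 hc1
      have hw : Z *ᵥ v i = s • v i := by rw [hueq, hPvv]
      -- v i = P *ᵥ v i = P *ᵥ (Z *ᵥ v i) = s • (P *ᵥ v i) = s • v i
      have hsv : v i = s • v i := by
        conv_lhs => rw [← hPvv, hPv_eq, hw, Matrix.mulVec_smul, hPvv]
      have hvne : v i ≠ 0 := by
        intro h
        have := hvv i
        rw [h] at this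
        simp [dotProduct] at this
      obtain ⟨j, hj⟩ := Function.ne_iff.mp hvne
      have hs1 : s = 1 := by
        have := congrFun hsv j
        simp only [Pi.smul_apply, smul_eq_mul] at this
        have : (1 - s) * v i j = 0 := by linarith [this]
        rcases mul_eq_zero.mp this with h | h
        · linarith
        · exact absurd h hj
      rw [hw, hs1, one_smul, hPvv]
  -- conclude Z = P
  have hQ : Z * (hA.eigenvectorUnitary : Matrix q q ℝ)
      = P * (hA.eigenvectorUnitary : Matrix q q ℝ) := by
    ext j i
    have := congrFun (hcol i) j
    simpa [Matrix.mul_apply, Matrix.mulVec, dotProduct,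
      Matrix.IsHermitian.eigenvectorUnitary_apply] using this
  have hq1 : (hA.eigenvectorUnitary : Matrix q q ℝ) * star (hA.eigenvectorUnitary : Matrix q q ℝ)
      = 1 := Matrix.mem_unitaryGroup_iff.mp hA.eigenvectorUnitary.2
  calc Z = Z * ((hA.eigenvectorUnitary : Matrix q q ℝ) *
        star (hA.eigenvectorUnitary : Matrix q q ℝ)) := by rw [hq1, Matrix.mul_one]
    _ = (Z * (hA.eigenvectorUnitary : Matrix q q ℝ)) *
        star (hA.eigenvectorUnitary : Matrix q q ℝ) := by rw [Matrix.mul_assoc]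
    _ = (P * (hA.eigenvectorUnitary : Matrix q q ℝ)) *
        star (hA.eigenvectorUnitary : Matrix q q ℝ) := by rw [hQ]
    _ = P := by rw [Matrix.mul_assoc, hq1, Matrix.mul_one]

lemma nn_proj (P : Matrix q q ℝ) (hPsym : Pᵀ = P) (hPP : P * P = P) :
    nuclearNorm P = P.trace := by
  have hB : (Pᵀ * P).IsHermitian := Matrix.isHermitian_conjTranspose_mul_self P
  set μ : q → ℝ := hB.eigenvalues with hmu
  set u : q → q → ℝ := fun i => ⇑(hB.eigenvectorBasis i) with hu
  have hnn : nuclearNorm P = ∑ i, Real.sqrt (μ i) := rfl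
  have huu : ∀ i, u i ⬝ᵥ u i = 1 := fun i => by simpa using orth hB i i
  have hBu : ∀ i, (Pᵀ * P) *ᵥ u i = μ i • u i := fun i => hB.mulVec_eigenvectorBasis i
  have hBP : Pᵀ * P = P := by rw [hPsym, hPP]
  have hidem : ∀ i, μ i * μ i = μ i := by
    intro i
    have h1 : (Pᵀ * P) *ᵥ ((Pᵀ * P) *ᵥ u i) = (μ i * μ i) • u i := by
      rw [hBu i, Matrix.mulVec_smul, hBu i, smul_smul]
    rw [Matrix.mulVec_mulVec, show (Pᵀ * P) * (Pᵀ * P) = Pᵀ * P by rw [hBP, hPP], hBu i] at h1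
    have hune : u i ≠ 0 := by
      intro h
      have := huu i
      rw [h] at this
      simp [dotProduct] at this
    obtain ⟨j, hj⟩ := Function.ne_iff.mp hune
    have := congrFun h1 j
    simp only [Pi.smul_apply, smul_eq_mul] at this
    exact mul_right_cancel₀ hj this.symm
  have hsqrt : ∀ i, Real.sqrt (μ i) = μ i := by
    intro i
    have h : μ i * (μ i - 1) = 0 := by linear_combination hidem i
    rcases mul_eq_zero.mp h with h | h
    · rw [h, Real.sqrt_zero]
    · rw [sub_eq_zero.mp h, Real.sqrt_one]
  rw [hnn, trace_formula hB P]
  apply Finset.sum_congr rfl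
  intro i _
  show Real.sqrt (μ i) = u i ⬝ᵥ (P *ᵥ u i)
  have hPu : P *ᵥ u i = μ i • u i := by rw [← hBP]; exact hBu i
  rw [hsqrt i, hPu, dotProduct_smul, smul_eq_mul, huu i, mul_one]

end NNProof

theorem stmt_11 {p q : Type*} [Fintype p] [Fintype q] [DecidableEq q] {r : ℕ}
    (X : Matrix p q ℝ) (hX0 : X ≠ 0)
    (UX : Matrix p (Fin r) ℝ) (σ : Fin r → ℝ) (VX : Matrix q (Fin r) ℝ)
    (hσ : ∀ i, 0 < σ i)
    (hU : UXᵀ * UX = 1) (hV : VXᵀ * VX = 1)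
    (hX : X = UX * Matrix.diagonal σ * VXᵀ) :
    X = X * (VX * VXᵀ) ∧
    (∀ Z : Matrix q q ℝ, X = X * Z → nuclearNorm (VX * VXᵀ) ≤ nuclearNorm Z) ∧
    (∀ Z : Matrix q q ℝ, X = X * Z →
      nuclearNorm Z = nuclearNorm (VX * VXᵀ) → Z = VX * VXᵀ) := by
  have hPsym : (VX * VXᵀ)ᵀ = VX * VXᵀ := by
    rw [Matrix.transpose_mul, Matrix.transpose_transpose]
  have hPP : (VX * VXᵀ) * (VX * VXᵀ) = VX * VXᵀ := by
    rw [Matrix.mul_assoc, ← Matrix.mul_assoc VXᵀ VX VXᵀ, hV, Matrix.one_mul]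
  have hL : Matrix.diagonal (fun i => (σ i)⁻¹) * (UXᵀ * X) = VXᵀ := by
    rw [hX, Matrix.mul_assoc UX (Matrix.diagonal σ) VXᵀ, ← Matrix.mul_assoc UXᵀ UX _, hU,
      Matrix.one_mul, ← Matrix.mul_assoc, Matrix.diagonal_mul_diagonal]
    have hfn : (fun i => (σ i)⁻¹ * σ i) = fun _ : Fin r => (1 : ℝ) :=
      funext fun i => inv_mul_cancel₀ (ne_of_gt (hσ i))
    have hdi : Matrix.diagonal (fun i => (σ i)⁻¹ * σ i) = (1 : Matrix (Fin r) (Fin r) ℝ) := by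
      rw [hfn, Matrix.diagonal_one]
    rw [hdi, Matrix.one_mul]
  have hVtZ : ∀ Z : Matrix q q ℝ, X = X * Z → VXᵀ * Z = VXᵀ := by
    intro Z hZ
    have h2 := congrArg (fun M => Matrix.diagonal (fun i => (σ i)⁻¹) * (UXᵀ * M)) hZ
    rw [← Matrix.mul_assoc UXᵀ X Z, ← Matrix.mul_assoc _ (UXᵀ * X) Z, hL] at h2
    exact h2.symm
  have hPZ : ∀ Z : Matrix q q ℝ, X = X * Z → (VX * VXᵀ) * Z = VX * VXᵀ := by
    intro Z hZ
    rw [Matrix.mul_assoc, hVtZ Z hZ]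
  refine ⟨?_, ?_, ?_⟩
  · rw [hX, Matrix.mul_assoc (UX * Matrix.diagonal σ) VXᵀ _, ← Matrix.mul_assoc VXᵀ VX VXᵀ,
      hV, Matrix.one_mul]
  · intro Z hZ
    have h := (NNProof.key (VX * VXᵀ) Z hPsym hPP (hPZ Z hZ)).1
    rw [NNProof.nn_proj (VX * VXᵀ) hPsym hPP]
    exact h
  · intro Z hZ heq
    exact (NNProof.key (VX * VXᵀ) Z hPsym hPP (hPZ Z hZ)).2
      (by rw [heq, NNProof.nn_proj (VX * VXᵀ) hPsym hPP])
end
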